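/- Let D = {z ∈ ℂ : |z − 1| < 1/3}, let g : ℂ → ℂ be an arbitrary map (in the paper, any Möbius transformation), and let F : ℂ → ℂ be defined by F(z) = g(z) if z ∈ D and F(z) = 2z if z ∉ D. Then the pre-discontinuity set of F is contained in the union of a shrinking sequence of closed discs together with the origin: closure(⋃_{n≥0} (F^[n])⁻¹(frontier D)) ⊆ {0} ∪ ⋃_{j∈ℕ} {z ∈ ℂ : |z − 2^{−j}| ≤ (1/3)·2^{−j}}. -/

import Mathlib

open Complex
open scoped Classical

/-- Section 2.3 (infinite-connectivity example): for `D` the disc of center `1`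
and radius `1/3`, `g` an arbitrary map, and `F` equal to `g` on `D` and to
`z ↦ 2z` outside `D`, the pre-discontinuity set of `F` is contained in `{0}`
together with the closed discs of center `2^{-j}` and radius `(1/3)·2^{-j}`. -/
theorem preDiscontinuity_subset_shrinking_discs
    (D : Set ℂ) (hD : D = {z : ℂ | ‖z - 1‖ < 1 / 3})
    (g : ℂ → ℂ) (F : ℂ → ℂ)
    (hF : ∀ z : ℂ, F z = if z ∈ D then g z else 2 * z) :
    closure (⋃ n : ℕ, (F^[n]) ⁻¹' (frontier D)) ⊆
      {0} ∪ ⋃ j : ℕ,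
        {z : ℂ | ‖z - (1 / 2 : ℂ) ^ j‖ ≤ (1 / 3) * (1 / 2 : ℝ) ^ j} := by
  set disc : ℕ → Set ℂ :=
    fun j => {z : ℂ | ‖z - (1 / 2 : ℂ) ^ j‖ ≤ (1 / 3) * (1 / 2 : ℝ) ^ j} with hdisc
  have hdiscBall : ∀ j, disc j = Metric.closedBall ((1/2:ℂ)^j) ((1/3)*(1/2:ℝ)^j) := by
    intro j; ext z; simp [hdisc, Complex.dist_eq]
  have hDsub : D ⊆ disc 0 := by
    intro z hz
    rw [hD] at hz
    simp only [hdisc, Set.mem_setOf_eq, pow_zero, mul_one]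
    exact le_of_lt hz
  have hfr : frontier D ⊆ disc 0 := by
    intro z hz
    have h1 : z ∈ closure D := hz.1
    have hball : D = Metric.ball (1:ℂ) (1/3) := by
      rw [hD]; ext w; simp [Complex.dist_eq]
    rw [hball] at h1
    have h2 : z ∈ Metric.closedBall (1:ℂ) (1/3) := Metric.closure_ball_subset_closedBall h1
    simp only [Metric.mem_closedBall, Complex.dist_eq] at h2
    simpa [hdisc] using h2
  have key : ∀ n z, F^[n] z ∈ frontier D → ∃ j, z ∈ disc j := by
    intro n
    induction n with
    | zero => intro z hz; exact ⟨0, hfr hz⟩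
    | succ n ih =>
      intro z hz
      rw [Function.iterate_succ_apply] at hz
      by_cases hzD : z ∈ D
      · exact ⟨0, hDsub hzD⟩
      · have hFz : F z = 2 * z := by rw [hF z, if_neg hzD]
        rw [hFz] at hz
        obtain ⟨j, hj⟩ := ih _ hz
        refine ⟨j + 1, ?_⟩
        simp only [hdisc, Set.mem_setOf_eq] at hj ⊢
        have heq : z - (1/2:ℂ)^(j+1) = (2 * z - (1/2:ℂ)^j) / 2 := by ring
        rw [heq, norm_div]
        have h2 : ‖(2:ℂ)‖ = 2 := by simp
        rw [h2]
        rw [pow_succ]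
        calc ‖2 * z - (1/2:ℂ)^j‖ / 2 ≤ ((1/3)*(1/2:ℝ)^j) / 2 := by
              gcongr
          _ = 1/3 * ((1/2:ℝ)^j * (1/2)) := by ring
  -- S is the RHS
  set S : Set ℂ := {0} ∪ ⋃ j : ℕ, disc j with hS
  have hUsub : (⋃ n : ℕ, (F^[n]) ⁻¹' (frontier D)) ⊆ S := by
    intro z hz
    simp only [Set.mem_iUnion, Set.mem_preimage] at hz
    obtain ⟨n, hn⟩ := hz
    obtain ⟨j, hj⟩ := key n z hn
    exact Or.inr (Set.mem_iUnion.2 ⟨j, hj⟩)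
  -- trapping sets
  have hT : ∀ N : ℕ, closure (⋃ n : ℕ, (F^[n]) ⁻¹' (frontier D)) ⊆
      (⋃ j ∈ Finset.range N, disc j) ∪ Metric.closedBall 0 ((4/3)*(1/2:ℝ)^N) := by
    intro N
    have hclosed : IsClosed ((⋃ j ∈ Finset.range N, disc j) ∪
        Metric.closedBall 0 ((4/3)*(1/2:ℝ)^N)) := by
      refine IsClosed.union ?_ Metric.isClosed_closedBall
      exact isClosed_biUnion_finset fun j _ => by
        rw [hdiscBall]; exact Metric.isClosed_closedBall
    refine closure_minimal ?_ hclosed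
    intro z hz
    rcases hUsub hz with h0 | hmem
    · right
      simp only [Set.mem_singleton_iff] at h0
      subst h0
      simp only [Metric.mem_closedBall, dist_self]
      positivity
    · obtain ⟨j, hj⟩ := Set.mem_iUnion.1 hmem
      by_cases hjN : j < N
      · exact Or.inl (Set.mem_biUnion (Finset.mem_range.2 hjN) hj)
      · right
        push_neg at hjN
        simp only [hdisc, Set.mem_setOf_eq] at hj
        simp only [Metric.mem_closedBall, Complex.dist_eq, sub_zero]
        have habsc : ‖(1/2:ℂ)^j‖ = (1/2:ℝ)^j := by
          rw [norm_pow]; norm_num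
        have h1 : ‖z‖ ≤ ‖z - (1/2:ℂ)^j‖ + ‖(1/2:ℂ)^j‖ := by
          calc ‖z‖ = ‖(z - (1/2:ℂ)^j) + (1/2:ℂ)^j‖ := by ring_nf
            _ ≤ _ := norm_add_le _ _
        have h2 : ((1/2:ℝ))^j ≤ (1/2:ℝ)^N :=
          pow_le_pow_of_le_one (by norm_num) (by norm_num) hjN
        rw [habsc] at h1
        nlinarith [pow_nonneg (by norm_num : (0:ℝ) ≤ 1/2) j]
  -- conclude
  intro x hx
  by_cases hxd : x ∈ ⋃ j : ℕ, disc j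
  · exact Or.inr hxd
  · left
    have hxe : ∀ N : ℕ, ‖x‖ ≤ (4/3)*(1/2:ℝ)^N := by
      intro N
      rcases hT N hx with h | h
      · exfalso
        obtain ⟨j, _, hj⟩ := Set.mem_iUnion₂.1 h
        exact hxd (Set.mem_iUnion.2 ⟨j, hj⟩)
      · simpa [Complex.dist_eq] using h
    have h0 : ‖x‖ = 0 := by
      by_contra hne
      have hpos : 0 < ‖x‖ := lt_of_le_of_ne (norm_nonneg x) (Ne.symm hne)
      obtain ⟨N, hN⟩ := exists_pow_lt_of_lt_one (show (0:ℝ) < (3/4) * ‖x‖ by positivity)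
        (show (1/2:ℝ) < 1 by norm_num)
      have := hxe N
      nlinarith
    simpa using norm_eq_zero.1 h0
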